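/- Let N, M be positive integers with 2M ≤ N, let U, D, U', D' ⊆ {1,…,M} satisfy U∪D = U'∪D', U∩D = U'∩D', 1 ∈ U∖D and 1 ∈ U'∖D', and let α, β ∈ {2,…,M}∖(U∪D). Write W̄ := {N+1−w : w∈W}, αU := U∪{α}, βD := D∪{β}. Then the following three quantities are unchanged when (U,D) is replaced by (U',D'): (i) Δ((U∖{1})∪D̄)·Δ(αU∪(βD)‾) / [Δ(U∪D̄)·Δ((αU∖{1})∪(βD)‾)]; (ii) Δ(αU∪D̄)·Δ((U∖{1})∪(βD)‾) / [Δ(U∪D̄)·Δ((αU∖{1})∪(βD)‾)]; (iii) Δ(U∪(βD)‾)·Δ((αU∖{1})∪D̄) / [Δ(U∪D̄)·Δ((αU∖{1})∪(βD)‾)]. (Here (βD)‾ = D̄∪{N+1−β} and all the sets occurring consist of distinct integers, so all the Δ's are nonzero.) -/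

import Mathlib

open Finset

namespace Shuf

/-- A unit triangle of the triangular lattice: `(a, b, o)` where `o = false` is the
up-pointing unit triangle with vertices `(a,b), (a+1,b), (a,b+1)` (in the lattice
coordinates whose embedding is `(a,b) ↦ (a + b/2, b·√3/2)`), and `o = true` is the
down-pointing unit triangle with vertices `(a+1,b), (a,b+1), (a+1,b+1)`. -/
abbrev Tri : Type := ℤ × ℤ × Bool

/-- Adjacency from an up-pointing triangle `s` to a down-pointing triangle `t`
(sharing a unit edge). -/
def adjUD (s t : Tri) : Prop :=
  s.2.2 = false ∧ t.2.2 = true ∧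
    ((t.1 = s.1 ∧ t.2.1 = s.2.1) ∨ (t.1 = s.1 - 1 ∧ t.2.1 = s.2.1) ∨
      (t.1 = s.1 ∧ t.2.1 = s.2.1 - 1))

/-- Two unit triangles share a unit edge (form a lozenge). -/
def adj (s t : Tri) : Prop := adjUD s t ∨ adjUD t s

/-- A lozenge tiling of the region `R` with barrier edges `Bar`, encoded as the
involution pairing each unit triangle of `R` with the one it is matched to. -/
def IsTiling (R : Set Tri) (Bar : Set (Tri × Tri)) (f : Tri → Tri) : Prop :=
  (∀ t, t ∉ R → f t = t) ∧
    ∀ t ∈ R, f t ∈ R ∧ adj t (f t) ∧ f (f t) = t ∧ (t, f t) ∉ Bar ∧ (f t, t) ∉ Bar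

/-- `M R Bar` : the number of lozenge tilings of the region `R` with barriers `Bar`. -/
noncomputable def M (R : Set Tri) (Bar : Set (Tri × Tri)) : ℕ :=
  Nat.card {f : Tri → Tri // IsTiling R Bar f}

/-- 180° rotation about the point `(c.1/2, c.2/2)` (lattice coordinates). -/
def rot (c : ℤ × ℤ) (t : Tri) : Tri := (c.1 - t.1 - 1, c.2 - t.2.1 - 1, !t.2.2)

/-- `Mc c R Bar` : the number of lozenge tilings of `R` invariant under the 180°
rotation about the point `(c.1/2, c.2/2)`. -/
noncomputable def Mc (c : ℤ × ℤ) (R : Set Tri) (Bar : Set (Tri × Tri)) : ℕ :=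
  Nat.card {f : Tri → Tri // IsTiling R Bar f ∧ ∀ t, f (rot c t) = rot c (f t)}

/-- The doubly-dented hexagon whose horizontal axis (at height `0`) runs from the
west vertex `(0,0)` to the east vertex `(L,0)`, whose upper half is a trapezoid of
height `hu` and whose lower half is a trapezoid of height `hd`; the up-pointing unit
triangle just above the axis at position `i` is removed for `i ∈ U`, and the
down-pointing one just below the axis at position `i` is removed for `i ∈ D`
(positions are labelled `1,…,L` from left to right). -/
def HRegion (L hu hd : ℤ) (U D : Set ℤ) : Set Tri :=
  {t | (t.2.2 = false ∧ 0 ≤ t.2.1 ∧ t.2.1 < hu ∧ 0 ≤ t.1 ∧ t.1 + t.2.1 ≤ L - 1 ∧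
          (t.2.1 = 0 → t.1 + 1 ∉ U)) ∨
       (t.2.2 = true ∧ 0 ≤ t.2.1 ∧ t.2.1 < hu ∧ 0 ≤ t.1 ∧ t.1 + t.2.1 ≤ L - 2) ∨
       (t.2.2 = false ∧ -hd ≤ t.2.1 ∧ t.2.1 ≤ -1 ∧ -t.2.1 ≤ t.1 ∧ t.1 ≤ L - 1) ∨
       (t.2.2 = true ∧ -hd ≤ t.2.1 ∧ t.2.1 ≤ -1 ∧ -t.2.1 - 1 ≤ t.1 ∧ t.1 ≤ L - 1 ∧
          (t.2.1 = -1 → t.1 + 1 ∉ D))}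

/-- The barrier edges along the axis at the positions of `B`: the barrier at
position `i` forbids the vertical lozenge formed by the up-triangle just above and
the down-triangle just below the `i`-th unit segment of the axis. -/
def HBar (B : Set ℤ) : Set (Tri × Tri) :=
  {e | ∃ i ∈ B, e = ((i - 1, 0, false), (i - 1, -1, true)) ∨
                 e = ((i - 1, -1, true), (i - 1, 0, false))}

/-- `MH x y U D B` : the number of lozenge tilings of the doubly-dented hexagon
`H_{x,y}(U; D; B)`. -/
noncomputable def MH (x y : ℕ) (U D B : Finset ℤ) : ℕ :=
  M (HRegion (x + y + (U ∪ D).card) (y + U.card) (y + D.card) ↑U ↑D) (HBar ↑B)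

/-- `mir N W = {N + 1 - w : w ∈ W}`, the reflection of an index set. -/
def mir (N : ℤ) (W : Finset ℤ) : Finset ℤ := W.image (fun w => N + 1 - w)

/-- `MCS x y U D B` : the number of lozenge tilings of the centrally symmetric
doubly-dented hexagon `CS_{x,y}(U; D; B) = H_{x,y}(U ∪ D̄; D ∪ Ū; B ∪ B̄)`,
where `N = x + y + 2|U ∪ D|` and `W̄ = {N+1-w : w ∈ W}`. -/
noncomputable def MCS (x y : ℕ) (U D B : Finset ℤ) : ℕ :=
  MH x y (U ∪ mir (x + y + 2 * (U ∪ D).card) D) (D ∪ mir (x + y + 2 * (U ∪ D).card) U)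
    (B ∪ mir (x + y + 2 * (U ∪ D).card) B)

/-- `McCS x y U D B` : the number of centrally symmetric lozenge tilings of
`CS_{x,y}(U; D; B)` (tilings invariant under the 180° rotation about the center
`(N/2, 0)` of the region, `N = x + y + 2|U ∪ D|`). -/
noncomputable def McCS (x y : ℕ) (U D B : Finset ℤ) : ℕ :=
  let N : ℤ := x + y + 2 * (U ∪ D).card
  let U' : Finset ℤ := U ∪ mir N D
  let D' : Finset ℤ := D ∪ mir N U
  Mc (N, 0)
    (HRegion (x + y + (U' ∪ D').card) (y + U'.card) (y + D'.card) ↑U' ↑D')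
    (HBar ↑(B ∪ mir N B))

/-- `Δprod S = ∏_{s < s' ∈ S} (s' - s)`. -/
def Δprod (S : Finset ℤ) : ℤ :=
  ∏ p ∈ (S ×ˢ S).filter (fun p => p.1 < p.2), (p.2 - p.1)

/-- MacMahon's box formula `PP(a,b,c)`. -/
def PP (a b c : ℕ) : ℚ :=
  ∏ i ∈ Icc 1 a, ∏ j ∈ Icc 1 b, ∏ k ∈ Icc 1 c,
    (((i : ℚ) + j + k - 1) / ((i : ℚ) + j + k - 2))

/-- The hyperfactorial `H(n) = 0!·1!⋯(n-1)!`. -/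
def hyperfac (n : ℕ) : ℕ := ∏ k ∈ range n, k.factorial

/-- The Pochhammer symbol `(q)_r = q(q+1)⋯(q+r-1)`. -/
def poch (q : ℚ) (r : ℕ) : ℚ := ∏ i ∈ range r, (q + i)

/-- The dented semihexagon `T_{a,b}(S)`: the trapezoid with north side `b`, slanted
sides `a` and base `a + b` lying above the horizontal axis (base from `(0,0)` to
`(a+b,0)`), with the up-pointing unit triangles at the positions of `S` removed
from its base. -/
def TRegion (a b : ℤ) (S : Set ℤ) : Set Tri :=
  {t | (t.2.2 = false ∧ 0 ≤ t.2.1 ∧ t.2.1 < a ∧ 0 ≤ t.1 ∧ t.1 + t.2.1 ≤ a + b - 1 ∧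
          (t.2.1 = 0 → t.1 + 1 ∉ S)) ∨
       (t.2.2 = true ∧ 0 ≤ t.2.1 ∧ t.2.1 < a ∧ 0 ≤ t.1 ∧ t.1 + t.2.1 ≤ a + b - 2)}

/-- `MT a b S` : the number of lozenge tilings of `T_{a,b}(S)`. -/
noncomputable def MT (a b : ℤ) (S : Finset ℤ) : ℕ := M (TRegion a b ↑S) ∅

/-- The trapezoid with base `L` (from `(0,0)` to `(L,0)`), height `h`. -/
def trapRegion (L h : ℤ) : Set Tri :=
  {t | (t.2.2 = false ∧ 0 ≤ t.2.1 ∧ t.2.1 < h ∧ 0 ≤ t.1 ∧ t.1 + t.2.1 ≤ L - 1) ∨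
       (t.2.2 = true ∧ 0 ≤ t.2.1 ∧ t.2.1 < h ∧ 0 ≤ t.1 ∧ t.1 + t.2.1 ≤ L - 2)}

/-- The unit triangles of the up-pointing triangle of side `s` whose base runs from
`(p,0)` to `(p+s,0)` (lying above the axis). -/
def upTriSet (p : ℤ) (s : ℕ) : Set Tri :=
  {t | t.2.2 = false ∧ 0 ≤ t.2.1 ∧ p ≤ t.1 ∧ t.1 + t.2.1 ≤ p + s - 1} ∪
  {t | t.2.2 = true ∧ 0 ≤ t.2.1 ∧ p ≤ t.1 ∧ t.1 + t.2.1 ≤ p + s - 2}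

/-- The unit triangles of the down-pointing triangle of side `s` whose top edge runs
from `(p,0)` to `(p+s,0)` (lying below the axis). -/
def downTriSet (p : ℤ) (s : ℕ) : Set Tri :=
  {t | t.2.2 = true ∧ -(s : ℤ) ≤ t.2.1 ∧ t.2.1 ≤ -1 ∧ p - t.2.1 - 1 ≤ t.1 ∧ t.1 ≤ p + s - 1} ∪
  {t | t.2.2 = false ∧ -(s : ℤ) ≤ t.2.1 ∧ t.2.1 ≤ -1 ∧ p - t.2.1 ≤ t.1 ∧ t.1 ≤ p + s - 1}

/-- A triangle of side `s` along the axis starting at `p`, up- or down-pointing. -/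
def triSet (p : ℤ) (s : ℕ) (up : Bool) : Set Tri :=
  if up then upTriSet p s else downTriSet p s

/-- The removed triangles, at the dents given by a run/gap sequence
`a₁ (run), a₂ (gap), a₃ (run), …` starting at `p`. -/
def seqRemoved : ℤ → List ℕ → Set Tri
  | _, [] => ∅
  | p, [s] => upTriSet p s
  | p, s :: g :: r => upTriSet p s ∪ seqRemoved (p + s + g) r

/-- `oSum [a₁,a₂,…] = a₁ + a₃ + a₅ + ⋯`. -/
def oSum : List ℕ → ℕ
  | [] => 0
  | [s] => s
  | s :: _ :: r => s + oSum r

/-- `sFun l = s(a₁,…,a_r)` : the number of lozenge tilings of the generalized dented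
semihexagon `S(a₁,…,a_r)` (trapezoid of base `a₁+⋯+a_r` and height `a₁+a₃+⋯`, with
up-pointing triangles of sides `a₁, a₃, …` removed from its base at mutual
distances `a₂, a₄, …`, the first one touching the west vertex). -/
noncomputable def sFun (l : List ℕ) : ℕ :=
  M (trapRegion l.sum (oSum l) \ seqRemoved 0 l) ∅

/-- A fern: a chain of lattice triangles of alternating orientations along the axis,
given by the list of side-lengths and the orientation of the first triangle. -/
structure Fern where
  lengths : List ℕ
  firstUp : Bool

/-- The total length of a fern. -/
def Fern.total (F : Fern) : ℕ := F.lengths.sum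

/-- Sum of the entries at even positions if the flag is `true` (resp. odd positions
if `false`). -/
def upLenAux : Bool → List ℕ → ℕ
  | _, [] => 0
  | true, s :: r => s + upLenAux false r
  | false, _ :: r => upLenAux true r

/-- The sum of side-lengths of the up-pointing triangles of a fern. -/
def Fern.up (F : Fern) : ℕ := upLenAux F.firstUp F.lengths

/-- The sum of side-lengths of the down-pointing triangles of a fern. -/
def Fern.down (F : Fern) : ℕ := upLenAux (!F.firstUp) F.lengths

/-- The image of a fern under 180° rotation. -/
def Fern.rot (F : Fern) : Fern :=
  ⟨F.lengths.reverse, if F.lengths.length % 2 = 1 then !F.firstUp else F.firstUp⟩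

/-- Concatenation of two ferns (the second continuing the alternation of the first). -/
def Fern.cat (F G : Fern) : Fern := ⟨F.lengths ++ G.lengths, F.firstUp⟩

/-- The unit triangles of a chain of triangles of alternating orientations starting
at `p` with the first orientation `o`. -/
def chainSet : ℤ → Bool → List ℕ → Set Tri
  | _, _, [] => ∅
  | p, o, s :: r => triSet p s o ∪ chainSet (p + s) (!o) r

/-- The unit triangles of the ferns `Fs` placed along the axis starting at `p` with
gaps `ds` between consecutive ferns. -/
def fernsSet : ℤ → List Fern → List ℕ → Set Tri
  | _, [], _ => ∅
  | p, F :: Fs, ds => chainSet p F.firstUp F.lengths ∪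
      fernsSet (p + F.total + ds.headI) Fs ds.tail

def totUp (Fs : List Fern) : ℕ := (Fs.map Fern.up).sum
def totDown (Fs : List Fern) : ℕ := (Fs.map Fern.down).sum

/-- The hexagon with ferns removed `R_{x,y}(F₁,…,F_k | d₁,…,d_{k-1})`. -/
def RRegion (x y : ℕ) (Fs : List Fern) (ds : List ℕ) : Set Tri :=
  HRegion (x + y + totUp Fs + totDown Fs) (y + totUp Fs) (y + totDown Fs) ∅ ∅ \
    fernsSet 0 Fs ds

/-- The number of lozenge tilings of `R_{x,y}(F₁,…,F_k | d₁,…,d_{k-1})`. -/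
noncomputable def MR (x y : ℕ) (Fs : List Fern) (ds : List ℕ) : ℕ :=
  M (RRegion x y Fs ds) ∅

/-- The number of centrally symmetric lozenge tilings of
`R_{x,y}(F₁,…,F_k | d₁,…,d_{k-1})` (for a centrally symmetric datum; the center of
the hexagon is the midpoint `(L/2, 0)` of its axis). -/
noncomputable def McR (x y : ℕ) (Fs : List Fern) (ds : List ℕ) : ℕ :=
  Mc ((x + y + totUp Fs + totDown Fs : ℤ), 0) (RRegion x y Fs ds) ∅

/-- The positions (labelled `1,2,…` from the left) of the removed up-pointing unit
triangles just above the axis, for a chain starting at `p` with first orientation `o`. -/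
noncomputable def upRunPos : ℤ → Bool → List ℕ → Finset ℤ
  | _, _, [] => ∅
  | p, true, s :: r => Finset.Icc (p + 1) (p + s) ∪ upRunPos (p + s) false r
  | p, false, s :: r => upRunPos (p + s) true r

/-- The positions of the removed up-pointing unit triangles along the axis for the
ferns `Fs` with gaps `ds`, starting at `p`. -/
noncomputable def upPosAll : ℤ → List Fern → List ℕ → Finset ℤ
  | _, [], _ => ∅
  | p, F :: Fs, ds => upRunPos p F.firstUp F.lengths ∪
      upPosAll (p + F.total + ds.headI) Fs ds.tail

/-- The positions of the removed down-pointing unit triangles along the axis. -/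
noncomputable def downPosAll (p : ℤ) (Fs : List Fern) (ds : List ℕ) : Finset ℤ :=
  upPosAll p (Fs.map (fun F => Fern.mk F.lengths (!F.firstUp))) ds

/-- The unit triangles removed in the generalized dented semihexagon determined by
the maximal runs of the position set `A`: a unit triangle is removed precisely when
the interval of base positions it lies over is contained in `A`. -/
def runRemoved (A : Finset ℤ) : Set Tri :=
  {t | ∀ i ∈ Finset.Icc (t.1 + 1) (t.1 + t.2.1 + (if t.2.2 then 2 else 1)), i ∈ A}

/-- `MS A` : the number of lozenge tilings of the generalized dented semihexagon
`S(e₁, e₂, …)` where `e₁, e₃, …` are the lengths of the maximal runs of `A` and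
`e₂, e₄, …` the gaps between consecutive runs (base `= max A`, height `= |A|`). -/
noncomputable def MS (A : Finset ℤ) : ℕ :=
  M (trapRegion (A.max.unbotD 0) A.card \ runRemoved A) ∅

/-- The fern list of `E_{x,y}(F₁,…,F_k | d₁,…,d_{k-1})`:
`F₁,…,F_{k-1}, F_k ∘ F̄_k, F̄_{k-1},…,F̄₁`. -/
def EFerns (Fs : List Fern) : List Fern :=
  Fs.dropLast ++ Fern.cat (Fs.getLastD ⟨[], true⟩) (Fern.rot (Fs.getLastD ⟨[], true⟩)) ::
    (Fs.dropLast.map Fern.rot).reverse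

/-- The gap list of `E_{x,y}` : `d₁,…,d_{k-1},d_{k-1},…,d₁`. -/
def Egaps (ds : List ℕ) : List ℕ := ds ++ ds.reverse

/-- The fern list of `E'_{x,y}(F₁,…,F_k | d₁,…,d_{k-1})` : `F₁,…,F_k,F̄_k,…,F̄₁`. -/
def E'Ferns (Fs : List Fern) : List Fern := Fs ++ (Fs.map Fern.rot).reverse

/-- The gap list of `E'_{x,y}` : `d₁,…,d_{k-1},1,d_{k-1},…,d₁`. -/
def E'gaps (ds : List ℕ) : List ℕ := ds ++ 1 :: ds.reverse

end Shuf

namespace Shuf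


lemma Δprod_pos (S : Finset ℤ) : 0 < Δprod S := by
  apply Finset.prod_pos
  intro p hp
  simp only [mem_filter] at hp
  omega

def Qd (a : ℤ) (S : Finset ℤ) : ℤ :=
  (∏ s ∈ S.filter (· < a), (a - s)) * ∏ s ∈ S.filter (a < ·), (s - a)

def Gd (S T : Finset ℤ) : ℤ := ∏ s ∈ S, ∏ t ∈ T, (t - s)

lemma Δprod_union {S T : Finset ℤ} (h : ∀ s ∈ S, ∀ t ∈ T, s < t) :
    Δprod (S ∪ T) = Δprod S * Δprod T * Gd S T := by
  classical
  have hST : ∀ a, a ∈ S → a ∈ T → False := fun a haS haT => lt_irrefl a (h a haS a haT)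
  have hset : ((S ∪ T) ×ˢ (S ∪ T)).filter (fun p => p.1 < p.2)
      = (((S ×ˢ S).filter (fun p => p.1 < p.2) ∪ (T ×ˢ T).filter (fun p => p.1 < p.2))
          ∪ S ×ˢ T) := by
    ext ⟨a, b⟩
    simp only [mem_filter, mem_union, mem_product]
    constructor
    · rintro ⟨⟨ha, hb⟩, hab⟩
      rcases ha with ha | ha <;> rcases hb with hb | hb
      · exact Or.inl (Or.inl ⟨⟨ha, hb⟩, hab⟩)
      · exact Or.inr ⟨ha, hb⟩
      · exact absurd (h b hb a ha) (by omega)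
      · exact Or.inl (Or.inr ⟨⟨ha, hb⟩, hab⟩)
    · rintro ((⟨⟨ha, hb⟩, hab⟩ | ⟨⟨ha, hb⟩, hab⟩) | ⟨ha, hb⟩)
      · exact ⟨⟨Or.inl ha, Or.inl hb⟩, hab⟩
      · exact ⟨⟨Or.inr ha, Or.inr hb⟩, hab⟩
      · exact ⟨⟨Or.inl ha, Or.inr hb⟩, h a ha b hb⟩
  have hd1 : Disjoint ((S ×ˢ S).filter (fun p => p.1 < p.2))
      ((T ×ˢ T).filter (fun p => p.1 < p.2)) := by
    rw [Finset.disjoint_left]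
    rintro ⟨a, b⟩ h1 h2
    simp only [mem_filter, mem_product] at h1 h2
    exact hST a h1.1.1 h2.1.1
  have hd2 : Disjoint ((S ×ˢ S).filter (fun p => p.1 < p.2)
      ∪ (T ×ˢ T).filter (fun p => p.1 < p.2)) (S ×ˢ T) := by
    rw [Finset.disjoint_left]
    rintro ⟨a, b⟩ h1 h2
    simp only [mem_filter, mem_product, mem_union] at h1 h2
    rcases h1 with h1 | h1
    · exact hST b h1.1.2 h2.2
    · exact hST a h2.1 h1.1.1
  rw [Δprod, hset, Finset.prod_union hd2, Finset.prod_union hd1]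
  rw [Finset.prod_product]
  rfl

lemma Δprod_insert {a : ℤ} {S : Finset ℤ} (ha : a ∉ S) :
    Δprod (insert a S) = Δprod S * Qd a S := by
  classical
  have hset : ((insert a S) ×ˢ (insert a S)).filter (fun p => p.1 < p.2)
      = ((S ×ˢ S).filter (fun p => p.1 < p.2)
          ∪ ((S.filter (· < a)) ×ˢ {a} ∪ {a} ×ˢ (S.filter (a < ·)))) := by
    ext ⟨x, y⟩
    simp only [mem_filter, mem_union, mem_product, mem_insert, mem_singleton]
    constructor
    · rintro ⟨⟨hx, hy⟩, hxy⟩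
      rcases hx with hx | hx <;> rcases hy with hy | hy
      · omega
      · subst hx; exact Or.inr (Or.inr ⟨rfl, hy, hxy⟩)
      · subst hy; exact Or.inr (Or.inl ⟨⟨hx, hxy⟩, rfl⟩)
      · exact Or.inl ⟨⟨hx, hy⟩, hxy⟩
    · rintro (⟨⟨hx, hy⟩, hxy⟩ | ⟨⟨hx, hxa⟩, hy⟩ | ⟨hx, hy, hya⟩)
      · exact ⟨⟨Or.inr hx, Or.inr hy⟩, hxy⟩
      · exact ⟨⟨Or.inr hx, Or.inl hy⟩, by omega⟩
      · exact ⟨⟨Or.inl hx, Or.inr hy⟩, by omega⟩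
  have hd1 : Disjoint ((S.filter (· < a)) ×ˢ ({a} : Finset ℤ))
      (({a} : Finset ℤ) ×ˢ (S.filter (a < ·))) := by
    rw [Finset.disjoint_left]
    rintro ⟨x, y⟩ h1 h2
    simp only [mem_product, mem_filter, mem_singleton] at h1 h2
    exact ha (h2.1 ▸ h1.1.1)
  have hd2 : Disjoint ((S ×ˢ S).filter (fun p => p.1 < p.2))
      ((S.filter (· < a)) ×ˢ ({a} : Finset ℤ) ∪ ({a} : Finset ℤ) ×ˢ (S.filter (a < ·))) := by
    rw [Finset.disjoint_left]
    rintro ⟨x, y⟩ h1 h2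
    simp only [mem_filter, mem_product, mem_union, mem_singleton] at h1 h2
    rcases h2 with h2 | h2
    · exact ha (h2.2 ▸ h1.1.2)
    · exact ha (h2.1 ▸ h1.1.1)
  have pa : ∏ p ∈ (S.filter (· < a)) ×ˢ ({a} : Finset ℤ), (p.2 - p.1)
      = ∏ s ∈ S.filter (· < a), (a - s) := by
    rw [Finset.prod_product]; simp
  have pb : ∏ p ∈ ({a} : Finset ℤ) ×ˢ (S.filter (a < ·)), (p.2 - p.1)
      = ∏ s ∈ S.filter (a < ·), (s - a) := by
    rw [Finset.prod_product]; simp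
  rw [Δprod, hset, Finset.prod_union hd2, Finset.prod_union hd1, pa, pb, Qd]
  rfl

lemma Qd_insert_lt {a x : ℤ} {S : Finset ℤ} (hx : x < a) (hxS : x ∉ S) :
    Qd a (insert x S) = (a - x) * Qd a S := by
  have h1 : (insert x S).filter (· < a) = insert x (S.filter (· < a)) := by
    rw [Finset.filter_insert, if_pos hx]
  have h2 : (insert x S).filter (a < ·) = S.filter (a < ·) := by
    rw [Finset.filter_insert, if_neg (by omega)]
  rw [Qd, h1, h2, Finset.prod_insert (by simp [hxS]), Qd]
  ring

lemma Qd_insert_gt {a x : ℤ} {S : Finset ℤ} (hx : a < x) (hxS : x ∉ S) :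
    Qd a (insert x S) = (x - a) * Qd a S := by
  have h1 : (insert x S).filter (· < a) = S.filter (· < a) := by
    rw [Finset.filter_insert, if_neg (by omega)]
  have h2 : (insert x S).filter (a < ·) = insert x (S.filter (a < ·)) := by
    rw [Finset.filter_insert, if_pos hx]
  rw [Qd, h1, h2, Finset.prod_insert (by simp [hxS]), Qd]
  ring

lemma Gd_insert_left {x : ℤ} {S T : Finset ℤ} (hx : x ∉ S) :
    Gd (insert x S) T = (∏ t ∈ T, (t - x)) * Gd S T := by
  rw [Gd, Finset.prod_insert hx, Gd]

lemma Gd_insert_right {y : ℤ} {S T : Finset ℤ} (hy : y ∉ T) :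
    Gd S (insert y T) = (∏ s ∈ S, (y - s)) * Gd S T := by
  rw [Gd, Gd, ← Finset.prod_mul_distrib]
  exact Finset.prod_congr rfl fun s _ => Finset.prod_insert hy


lemma key (N M : ℕ) (hNM : 2 * M ≤ N) (U D : Finset ℤ)
    (hU : U ⊆ Icc 1 (M : ℤ)) (hD : D ⊆ Icc 1 (M : ℤ))
    (h1U : 1 ∈ U) (h1D : 1 ∉ D) (α β : ℤ)
    (hα2 : 2 ≤ α) (hαM : α ≤ (M : ℤ)) (hαUD : α ∉ U ∪ D)
    (hβ2 : 2 ≤ β) (hβM : β ≤ (M : ℤ)) (hβUD : β ∉ U ∪ D) :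
    (((Δprod ((U \ {1}) ∪ mir N D) * Δprod (insert α U ∪ mir N (insert β D)) : ℤ) : ℚ) /
        ((Δprod (U ∪ mir N D) * Δprod ((insert α U \ {1}) ∪ mir N (insert β D)) : ℤ) : ℚ) =
      ((α : ℚ) - 1) * ((N : ℚ) - (β : ℚ))) ∧
    (((Δprod (insert α U ∪ mir N D) * Δprod ((U \ {1}) ∪ mir N (insert β D)) : ℤ) : ℚ) /
        ((Δprod (U ∪ mir N D) * Δprod ((insert α U \ {1}) ∪ mir N (insert β D)) : ℤ) : ℚ) =
      ((α : ℚ) - 1) / ((N : ℚ) + 1 - (α : ℚ) - (β : ℚ))) ∧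
    (((Δprod (U ∪ mir N (insert β D)) * Δprod ((insert α U \ {1}) ∪ mir N D) : ℤ) : ℚ) /
        ((Δprod (U ∪ mir N D) * Δprod ((insert α U \ {1}) ∪ mir N (insert β D)) : ℤ) : ℚ) =
      ((N : ℚ) - (β : ℚ)) / ((N : ℚ) + 1 - (α : ℚ) - (β : ℚ))) := by
  classical
  rw [Finset.mem_union, not_or] at hαUD hβUD
  obtain ⟨hαU, hαD⟩ := hαUD
  obtain ⟨hβU, hβD⟩ := hβUD
  have hM2 : (2 * M : ℤ) ≤ (N : ℤ) := by exact_mod_cast hNM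
  have hUb : ∀ s ∈ U, 1 ≤ s ∧ s ≤ (M : ℤ) := fun s hs => by
    have := hU hs; rw [mem_Icc] at this; exact this
  have hDb' : ∀ d ∈ D, 1 ≤ d ∧ d ≤ (M : ℤ) := fun d hd => by
    have := hD hd; rw [mem_Icc] at this; exact this
  have hmb : mir (N : ℤ) (insert β D) = insert ((N : ℤ) + 1 - β) (mir (N : ℤ) D) := by
    rw [mir, Finset.image_insert]; rfl
  rw [hmb, ← Finset.erase_eq, ← Finset.erase_eq,
    Finset.erase_insert_of_ne (by omega : α ≠ 1)]
  set Db : Finset ℤ := mir (N : ℤ) D with hDbdef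
  set A : Finset ℤ := U.erase 1 with hA
  have h1A : 1 ∉ A := Finset.notMem_erase 1 U
  have hαA : α ∉ A := fun h => hαU (Finset.mem_of_mem_erase h)
  have h1αA : (1 : ℤ) ∉ insert α A := by
    simp only [Finset.mem_insert]
    push_neg
    exact ⟨by omega, h1A⟩
  have hbDb : (N : ℤ) + 1 - β ∉ Db := by
    rw [hDbdef, mir]
    simp only [Finset.mem_image, not_exists]
    rintro d ⟨hd, hdb⟩
    have : d = β := by omega
    exact hβD (this ▸ hd)
  have hUA : U = insert 1 A := (Finset.insert_erase h1U).symm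
  rw [hUA, Finset.insert_comm α 1]
  have hbel : ∀ s ∈ insert α U, ∀ t ∈ insert ((N : ℤ) + 1 - β) Db, s < t := by
    intro s hs t ht
    have hs' : s ≤ (M : ℤ) := by
      rcases Finset.mem_insert.1 hs with h | h
      · omega
      · exact (hUb s h).2
    have ht' : (N : ℤ) + 1 - (M : ℤ) ≤ t := by
      rcases Finset.mem_insert.1 ht with h | h
      · omega
      · rw [hDbdef, mir] at h
        obtain ⟨d, hd, rfl⟩ := Finset.mem_image.1 h
        have := (hDb' d hd).2
        omega
    omega
  have sAU : A ⊆ insert α U := (Finset.erase_subset _ _).trans (Finset.subset_insert _ _)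
  have s1AU : insert 1 A ⊆ insert α U := by
    rw [← hUA]; exact Finset.subset_insert _ _
  have sαAU : insert α A ⊆ insert α U := Finset.insert_subset_insert _ (Finset.erase_subset _ _)
  have s1αAU : insert 1 (insert α A) ⊆ insert α U := by
    rw [← Finset.insert_comm, ← hUA]
  have sDb : Db ⊆ insert ((N : ℤ) + 1 - β) Db := Finset.subset_insert _ _
  have belgen : ∀ {S T : Finset ℤ}, S ⊆ insert α U → T ⊆ insert ((N : ℤ) + 1 - β) Db →
      ∀ s ∈ S, ∀ t ∈ T, s < t := fun hS hT s hs t ht => hbel s (hS hs) t (hT ht)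
  have e1 : Δprod (insert 1 A ∪ Db) =
      (Δprod A * Qd 1 A) * Δprod Db * ((∏ t ∈ Db, (t - 1)) * Gd A Db) := by
    rw [Δprod_union (belgen s1AU sDb), Δprod_insert h1A, Gd_insert_left h1A]
  have e2 : Δprod (A ∪ Db) = Δprod A * Δprod Db * Gd A Db :=
    Δprod_union (belgen sAU sDb)
  have e3 : Δprod (insert α A ∪ Db) =
      (Δprod A * Qd α A) * Δprod Db * ((∏ t ∈ Db, (t - α)) * Gd A Db) := by
    rw [Δprod_union (belgen sαAU sDb), Δprod_insert hαA, Gd_insert_left hαA]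
  have e4 : Δprod (insert 1 (insert α A) ∪ Db) =
      ((Δprod A * Qd α A) * ((α - 1) * Qd 1 A)) * Δprod Db *
        ((∏ t ∈ Db, (t - 1)) * ((∏ t ∈ Db, (t - α)) * Gd A Db)) := by
    rw [Δprod_union (belgen s1αAU sDb), Δprod_insert h1αA, Δprod_insert hαA,
      Qd_insert_gt (by omega : (1:ℤ) < α) hαA, Gd_insert_left h1αA, Gd_insert_left hαA]
  have e5 : Δprod (insert 1 A ∪ insert ((N : ℤ) + 1 - β) Db) =
      (Δprod A * Qd 1 A) * (Δprod Db * Qd ((N : ℤ) + 1 - β) Db) *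
        ((((N : ℤ) + 1 - β - 1) * ∏ t ∈ Db, (t - 1)) *
          ((∏ s ∈ A, ((N : ℤ) + 1 - β - s)) * Gd A Db)) := by
    rw [Δprod_union (belgen s1AU Finset.Subset.rfl), Δprod_insert h1A, Δprod_insert hbDb,
      Gd_insert_left h1A, Finset.prod_insert hbDb, Gd_insert_right hbDb]
  have e6 : Δprod (A ∪ insert ((N : ℤ) + 1 - β) Db) =
      Δprod A * (Δprod Db * Qd ((N : ℤ) + 1 - β) Db) *
        ((∏ s ∈ A, ((N : ℤ) + 1 - β - s)) * Gd A Db) := by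
    rw [Δprod_union (belgen sAU Finset.Subset.rfl), Δprod_insert hbDb, Gd_insert_right hbDb]
  have e7 : Δprod (insert α A ∪ insert ((N : ℤ) + 1 - β) Db) =
      (Δprod A * Qd α A) * (Δprod Db * Qd ((N : ℤ) + 1 - β) Db) *
        ((((N : ℤ) + 1 - β - α) * ∏ t ∈ Db, (t - α)) *
          ((∏ s ∈ A, ((N : ℤ) + 1 - β - s)) * Gd A Db)) := by
    rw [Δprod_union (belgen sαAU Finset.Subset.rfl), Δprod_insert hαA, Δprod_insert hbDb,
      Gd_insert_left hαA, Finset.prod_insert hbDb, Gd_insert_right hbDb]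
  have e8 : Δprod (insert 1 (insert α A) ∪ insert ((N : ℤ) + 1 - β) Db) =
      ((Δprod A * Qd α A) * ((α - 1) * Qd 1 A)) *
        (Δprod Db * Qd ((N : ℤ) + 1 - β) Db) *
        ((((N : ℤ) + 1 - β - 1) * ∏ t ∈ Db, (t - 1)) *
          ((((N : ℤ) + 1 - β - α) * ∏ t ∈ Db, (t - α)) *
            ((∏ s ∈ A, ((N : ℤ) + 1 - β - s)) * Gd A Db))) := by
    rw [Δprod_union (belgen s1αAU Finset.Subset.rfl), Δprod_insert h1αA, Δprod_insert hαA,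
      Δprod_insert hbDb, Qd_insert_gt (by omega : (1:ℤ) < α) hαA,
      Gd_insert_left h1αA, Gd_insert_left hαA, Finset.prod_insert hbDb,
      Finset.prod_insert hbDb, Gd_insert_right hbDb]
  have hposden : (0 : ℤ) <
      Δprod (insert 1 A ∪ Db) * Δprod (insert α A ∪ insert ((N : ℤ) + 1 - β) Db) :=
    mul_pos (Δprod_pos _) (Δprod_pos _)
  have hden : ((Δprod (insert 1 A ∪ Db) *
      Δprod (insert α A ∪ insert ((N : ℤ) + 1 - β) Db) : ℤ) : ℚ) ≠ 0 :=
    Int.cast_ne_zero.mpr (ne_of_gt hposden)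
  have hne : ((N : ℤ) + 1 - α - β) ≠ 0 := by omega
  have hd2 : ((N : ℚ) + 1 - (α : ℚ) - (β : ℚ)) ≠ 0 := by
    intro h
    apply hne
    have : (((N : ℤ) + 1 - α - β : ℤ) : ℚ) = 0 := by push_cast; linarith
    exact_mod_cast this
  refine ⟨?_, ?_, ?_⟩
  · rw [div_eq_iff hden]
    have hid : Δprod (A ∪ Db) * Δprod (insert 1 (insert α A) ∪ insert ((N : ℤ) + 1 - β) Db) =
        ((α - 1) * ((N : ℤ) - β)) *
          (Δprod (insert 1 A ∪ Db) * Δprod (insert α A ∪ insert ((N : ℤ) + 1 - β) Db)) := by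
      rw [e2, e8, e1, e7]; ring
    have hc := congrArg (fun z : ℤ => (z : ℚ)) hid
    push_cast at hc ⊢
    linear_combination hc
  · rw [div_eq_div_iff hden hd2]
    have hid : ((N : ℤ) + 1 - β - α) *
        (Δprod (insert 1 (insert α A) ∪ Db) * Δprod (A ∪ insert ((N : ℤ) + 1 - β) Db)) =
        (α - 1) *
          (Δprod (insert 1 A ∪ Db) * Δprod (insert α A ∪ insert ((N : ℤ) + 1 - β) Db)) := by
      rw [e4, e6, e1, e7]; ring
    have hc := congrArg (fun z : ℤ => (z : ℚ)) hid
    push_cast at hc ⊢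
    linear_combination hc
  · rw [div_eq_div_iff hden hd2]
    have hid : ((N : ℤ) + 1 - β - α) *
        (Δprod (insert 1 A ∪ insert ((N : ℤ) + 1 - β) Db) * Δprod (insert α A ∪ Db)) =
        ((N : ℤ) - β) *
          (Δprod (insert 1 A ∪ Db) * Δprod (insert α A ∪ insert ((N : ℤ) + 1 - β) Db)) := by
      rw [e5, e3, e1, e7]; ring
    have hc := congrArg (fun z : ℤ => (z : ℚ)) hid
    push_cast at hc ⊢
    linear_combination hc


/-- Claim 1: the three Δ-ratios in the case `1 ∈ U∖D`. -/
theorem stmt9 (N M : ℕ) (hN : 0 < N) (hM : 0 < M) (hNM : 2 * M ≤ N)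
    (U D U' D' : Finset ℤ)
    (hU : U ⊆ Icc 1 (M : ℤ)) (hD : D ⊆ Icc 1 (M : ℤ))
    (hU' : U' ⊆ Icc 1 (M : ℤ)) (hD' : D' ⊆ Icc 1 (M : ℤ))
    (hUD : U ∪ D = U' ∪ D') (hI : U ∩ D = U' ∩ D')
    (h1U : 1 ∈ U) (h1D : 1 ∉ D) (h1U' : 1 ∈ U') (h1D' : 1 ∉ D')
    (α β : ℤ) (hα : α ∈ Icc (2 : ℤ) (M : ℤ) \ (U ∪ D)) (hβ : β ∈ Icc (2 : ℤ) (M : ℤ) \ (U ∪ D)) :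
    ((Δprod ((U \ {1}) ∪ mir N D) * Δprod (insert α U ∪ mir N (insert β D)) : ℤ) : ℚ) /
        ((Δprod (U ∪ mir N D) * Δprod ((insert α U \ {1}) ∪ mir N (insert β D)) : ℤ) : ℚ) =
      ((Δprod ((U' \ {1}) ∪ mir N D') * Δprod (insert α U' ∪ mir N (insert β D')) : ℤ) : ℚ) /
        ((Δprod (U' ∪ mir N D') * Δprod ((insert α U' \ {1}) ∪ mir N (insert β D')) : ℤ) : ℚ) ∧
    ((Δprod (insert α U ∪ mir N D) * Δprod ((U \ {1}) ∪ mir N (insert β D)) : ℤ) : ℚ) /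
        ((Δprod (U ∪ mir N D) * Δprod ((insert α U \ {1}) ∪ mir N (insert β D)) : ℤ) : ℚ) =
      ((Δprod (insert α U' ∪ mir N D') * Δprod ((U' \ {1}) ∪ mir N (insert β D')) : ℤ) : ℚ) /
        ((Δprod (U' ∪ mir N D') * Δprod ((insert α U' \ {1}) ∪ mir N (insert β D')) : ℤ) : ℚ) ∧
    ((Δprod (U ∪ mir N (insert β D)) * Δprod ((insert α U \ {1}) ∪ mir N D) : ℤ) : ℚ) /
        ((Δprod (U ∪ mir N D) * Δprod ((insert α U \ {1}) ∪ mir N (insert β D)) : ℤ) : ℚ) =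
      ((Δprod (U' ∪ mir N (insert β D')) * Δprod ((insert α U' \ {1}) ∪ mir N D') : ℤ) : ℚ) /
        ((Δprod (U' ∪ mir N D') * Δprod ((insert α U' \ {1}) ∪ mir N (insert β D')) : ℤ) : ℚ) := by
  rw [Finset.mem_sdiff, Finset.mem_Icc] at hα hβ
  obtain ⟨⟨hα2, hαM⟩, hαUD⟩ := hα
  obtain ⟨⟨hβ2, hβM⟩, hβUD⟩ := hβ
  obtain ⟨k1, k2, k3⟩ := key N M hNM U D hU hD h1U h1D α β hα2 hαM hαUD hβ2 hβM hβUD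
  obtain ⟨k1', k2', k3'⟩ := key N M hNM U' D' hU' hD' h1U' h1D' α β hα2 hαM
    (hUD ▸ hαUD) hβ2 hβM (hUD ▸ hβUD)
  exact ⟨k1.trans k1'.symm, k2.trans k2'.symm, k3.trans k3'.symm⟩


end Shuf
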